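/- Let (c_i) be an n-periodic sequence satisfying D_{i, n-3+i} = 0 for all i. Then for all i, D_{i,n-1+i} = D_{i,n-2+i}, and this common value equals (1/2) Σ_{I cyclically sparse} (-1)^{|I|} c_I. -/

import Mathlib

/-- The continuant `D_{i,j}` of the sequence `c`, encoded by length:
`D c i ℓ` corresponds to `D_{i,j}` with `ℓ = j - i + 3`. -/
noncomputable def D (c : ℤ → ℂ) (i : ℤ) : ℕ → ℂ
  | 0 => 0
  | 1 => 1
  | 2 => 1
  | (m + 3) => D c i (m + 2) - c (i + m) * D c i (m + 1)

/-- If the `n`-periodic sequence `c` satisfies `D_{i,n-3+i} = 0` for all `i`,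
then `D_{i,n-1+i} = D_{i,n-2+i}` (lengths `n+2` and `n+1`), and the common
value is half the cyclically sparse alternating sum `(1/2) Σ (-1)^{|I|} c_I`. -/
lemma D_rec (c : ℤ → ℂ) (i : ℤ) (m : ℕ) :
    D c i (m + 3) = D c i (m + 2) - c (i + m) * D c i (m + 1) := rfl

lemma D_leftrec (c : ℤ → ℂ) : ∀ (k : ℕ) (i : ℤ),
    D c i (k + 2) = D c (i + 1) (k + 1) - c i * D c (i + 2) k := by
  intro k
  induction k using Nat.strong_induction_on with
  | _ k ih =>
    match k with
    | 0 => intro i; simp [D]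
    | 1 => intro i; simp [D]
    | 2 =>
      intro i
      simp [D]
      ring
    | (m + 3) =>
      intro i
      have e1 := ih (m+2) (by omega) i
      have e2 := ih (m+1) (by omega) i
      have r1 := D_rec c i (m+2)
      have r2 := D_rec c (i+1) (m+1)
      have r3 := D_rec c (i+2) m
      have hc1 : ((i+1) + ((m+1:ℕ):ℤ)) = i + ((m+2:ℕ):ℤ) := by push_cast; ring
      have hc2 : ((i+2) + ((m:ℕ):ℤ)) = i + ((m+2:ℕ):ℤ) := by push_cast; ring
      rw [hc1] at r2
      rw [hc2] at r3
      show D c i (m+5) = D c (i+1) (m+4) - c i * D c (i+2) (m+3)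
      rw [show m+5 = (m+2)+3 from by omega, r1,
          show m+4 = (m+1)+3 from by omega, r2, r3,
          show (m+2)+2 = m+4 from by omega, show (m+2)+1 = m+3 from by omega,
          show (m+1)+2 = m+3 from by omega, show (m+1)+1 = m+2 from by omega] at *
      rw [e1, e2]
      ring

lemma D_expand (c : ℤ → ℂ) : ∀ (ℓ a : ℕ),
    D c (a : ℤ) (ℓ + 2) =
      ∑ I ∈ (Finset.Ico a (a + ℓ)).powerset.filter (fun I => ∀ k ∈ I, k + 1 ∉ I),
        (-1 : ℂ) ^ I.card * ∏ k ∈ I, c (k : ℤ) := by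
  intro ℓ
  induction ℓ using Nat.strong_induction_on with
  | _ ℓ ih =>
    match ℓ with
    | 0 => intro a; simp [D, Finset.filter_singleton]
    | 1 =>
      intro a
      have h1 : Finset.Ico a (a + 1) = insert a (∅ : Finset ℕ) := by ext k; simp
      rw [h1, Finset.sum_filter, Finset.sum_powerset_insert (Finset.notMem_empty a)]
      simp only [Finset.powerset_empty, Finset.sum_singleton]
      have hp1 : (∀ k ∈ (∅ : Finset ℕ), k + 1 ∉ (∅ : Finset ℕ)) := by simp
      have hp2 : (∀ k ∈ insert a (∅ : Finset ℕ), k + 1 ∉ insert a (∅ : Finset ℕ)) := by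
        intro k hk; simp at hk ⊢; omega
      rw [if_pos hp1, if_pos hp2]
      simp [D]
      ring
    | (m + 2) =>
      intro a
      set x := a + m + 1 with hxdef
      have hIco : Finset.Ico a (a + (m + 2)) = insert x (Finset.Ico a (a + (m + 1))) := by
        ext k; simp [hxdef]; omega
      have hx : x ∉ Finset.Ico a (a + (m + 1)) := by simp [hxdef]; omega
      rw [hIco, Finset.sum_filter, Finset.sum_powerset_insert hx]
      have key1 : ∑ I ∈ (Finset.Ico a (a + (m + 1))).powerset,
          (if (∀ k ∈ I, k + 1 ∉ I) then (-1 : ℂ) ^ I.card * ∏ k ∈ I, c (k : ℤ) else 0)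
          = D c (a : ℤ) ((m + 1) + 2) := by
        rw [← Finset.sum_filter, ← ih (m+1) (by omega) a]
      have key2 : ∑ I ∈ (Finset.Ico a (a + (m + 1))).powerset,
          (if (∀ k ∈ insert x I, k + 1 ∉ insert x I) then
            (-1 : ℂ) ^ (insert x I).card * ∏ k ∈ insert x I, c (k : ℤ) else 0)
          = - c (x : ℤ) * D c (a : ℤ) (m + 2) := by
        rw [ih m (by omega) a, Finset.sum_filter, Finset.mul_sum]
        have hsub : (Finset.Ico a (a + m)).powerset ⊆ (Finset.Ico a (a + (m + 1))).powerset :=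
          Finset.powerset_mono.2 (by intro k; simp; omega)
        rw [← Finset.sum_subset hsub ?vanish]
        case vanish =>
          intro I hI hnI
          have hIsub : I ⊆ Finset.Ico a (a + (m + 1)) := Finset.mem_powerset.1 hI
          have ham : a + m ∈ I := by
            by_contra ham
            apply hnI
            rw [Finset.mem_powerset]
            intro k hk
            have hk' := hIsub hk
            simp only [Finset.mem_Ico] at hk' ⊢
            have : k ≠ a + m := by intro hh; subst hh; exact ham hk
            omega
          rw [if_neg]
          intro hsp
          exact hsp (a + m) (Finset.mem_insert_of_mem ham)
            (by rw [show a + m + 1 = x from rfl]; exact Finset.mem_insert_self _ _)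
        · apply Finset.sum_congr rfl
          intro I hI
          have hIsub : I ⊆ Finset.Ico a (a + m) := Finset.mem_powerset.1 hI
          have hbound : ∀ k ∈ I, k < a + m := by
            intro k hk; have := hIsub hk; simp at this; omega
          have hxI : x ∉ I := by intro h; have := hbound x h; omega
          have hiff : (∀ k ∈ insert x I, k + 1 ∉ insert x I) ↔ (∀ k ∈ I, k + 1 ∉ I) := by
            constructor
            · intro H k hk
              have := H k (Finset.mem_insert_of_mem hk)
              intro hk1
              exact this (Finset.mem_insert_of_mem hk1)
            · intro H k hk
              rcases Finset.mem_insert.1 hk with rfl | hk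
              · intro hmem
                rcases Finset.mem_insert.1 hmem with h | h
                · omega
                · have := hbound _ h; omega
              · intro hmem
                rcases Finset.mem_insert.1 hmem with h | h
                · have := hbound _ hk; omega
                · exact H k hk h
          rw [if_congr hiff rfl rfl]
          by_cases hs : ∀ k ∈ I, k + 1 ∉ I
          · rw [if_pos hs, if_pos hs, Finset.card_insert_of_notMem hxI,
              Finset.prod_insert hxI, pow_succ]
            ring
          · rw [if_neg hs, if_neg hs, mul_zero]
      rw [key1, key2]
      have hcx : ((x : ℕ) : ℤ) = (a : ℤ) + ((m + 1 : ℕ) : ℤ) := by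
        rw [hxdef]; push_cast; ring
      rw [show (m + 2) + 2 = (m + 1) + 3 from by omega, D_rec c a (m+1),
        show (m + 1) + 1 = m + 2 from by omega]
      rw [hcx]
      ring

theorem stmt7 (c : ℤ → ℂ) (n : ℕ) (hn : 4 ≤ n)
    (hper : ∀ i : ℤ, c (i + n) = c i)
    (hD : ∀ i : ℤ, D c i n = 0) :
    ∀ i : ℤ, D c i (n + 2) = D c i (n + 1) ∧
      D c i (n + 1) =
        (1 / 2) * ∑ I ∈ (Finset.Icc 1 n).powerset.filter
            (fun I => ∀ k ∈ I, (k % n + 1) ∉ I),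
          (-1 : ℂ) ^ I.card * ∏ k ∈ I, c (k : ℤ) := by
  obtain ⟨m, rfl⟩ : ∃ m, n = m + 4 := ⟨n - 4, by omega⟩
  -- first equality: length n+2 = length n+1
  have e1 : ∀ i : ℤ, D c i (m + 6) = D c i (m + 5) := by
    intro i
    have := D_rec c i (m + 3)
    rw [show (m+3)+3 = m+6 from by omega, show (m+3)+2 = m+5 from by omega,
      show (m+3)+1 = m+4 from by omega, hD i, mul_zero, sub_zero] at this
    exact this
  -- step: the (n+1)-value is shift-invariant
  have key : ∀ i : ℤ, D c i (m + 5) = D c (i + 1) (m + 5) := by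
    intro i
    have h2 := D_leftrec c (m + 4) i
    rw [show (m+4)+2 = m+6 from by omega, show (m+4)+1 = m+5 from by omega,
      hD (i + 2), mul_zero, sub_zero] at h2
    rw [← e1 i, h2]
  have hconst : ∀ i : ℤ, D c i (m + 5) = D c 0 (m + 5) := by
    intro i
    induction i using Int.induction_on with
    | zero => rfl
    | succ j ihj => rw [← key (j : ℤ)]; exact ihj
    | pred j ihj =>
      rw [key (-(j : ℤ) - 1), show (-(j : ℤ) - 1) + 1 = -(j : ℤ) from by ring]
      exact ihj
  have hE : ∀ i : ℤ, D c i (m + 5) = D c 1 (m + 5) := fun i =>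
    (hconst i).trans (hconst 1).symm
  -- value of D c 2 (m+5)
  have h2v : D c 2 (m + 5) = - c ((m + 4 : ℕ) : ℤ) * D c 2 (m + 3) := by
    have := D_rec c 2 (m + 2)
    rw [show (m+2)+3 = m+5 from by omega, show (m+2)+2 = m+4 from by omega,
      show (m+2)+1 = m+3 from by omega, hD 2, zero_sub,
      show (2 : ℤ) + ((m+2:ℕ) : ℤ) = ((m+4:ℕ) : ℤ) from by push_cast; ring] at this
    rw [this]; ring
  -- the cyclic sparse sum
  have hsum : ∑ I ∈ (Finset.Icc 1 (m+4)).powerset.filter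
        (fun I => ∀ k ∈ I, (k % (m+4) + 1) ∉ I),
        (-1 : ℂ) ^ I.card * ∏ k ∈ I, c (k : ℤ)
      = D c 1 (m + 5) + D c 2 (m + 5) := by
    have hIcc : Finset.Icc 1 (m+4) = insert (m+4) (Finset.Icc 1 (m+3)) := by
      ext k; simp; omega
    have hnm : (m+4) ∉ Finset.Icc 1 (m+3) := by simp
    rw [hIcc, Finset.sum_filter, Finset.sum_powerset_insert hnm]
    have part1 : ∑ I ∈ (Finset.Icc 1 (m+3)).powerset,
        (if (∀ k ∈ I, (k % (m+4) + 1) ∉ I) then (-1 : ℂ) ^ I.card * ∏ k ∈ I, c (k : ℤ) else 0)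
        = D c 1 (m + 5) := by
      have hmatch : ∀ I ∈ (Finset.Icc 1 (m+3)).powerset,
          (if (∀ k ∈ I, (k % (m+4) + 1) ∉ I) then (-1 : ℂ) ^ I.card * ∏ k ∈ I, c (k : ℤ) else 0)
          = (if (∀ k ∈ I, k + 1 ∉ I) then (-1 : ℂ) ^ I.card * ∏ k ∈ I, c (k : ℤ) else 0) := by
        intro I hI
        have hIsub : I ⊆ Finset.Icc 1 (m+3) := Finset.mem_powerset.1 hI
        have hmod : ∀ k ∈ I, k % (m+4) = k := by
          intro k hk
          have := hIsub hk; simp at this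
          exact Nat.mod_eq_of_lt (by omega)
        apply if_congr _ rfl rfl
        constructor
        · intro H k hk; have := H k hk; rwa [hmod k hk] at this
        · intro H k hk; rw [hmod k hk]; exact H k hk
      rw [Finset.sum_congr rfl hmatch, ← Finset.sum_filter]
      have hIco : Finset.Icc 1 (m+3) = Finset.Ico 1 (1 + (m+3)) := by
        ext k; simp; omega
      rw [hIco]
      have := D_expand c (m+3) 1
      rw [show (m+3)+2 = m+5 from by omega, Nat.cast_one] at this
      rw [← this]
    have part2 : ∑ I ∈ (Finset.Icc 1 (m+3)).powerset,
        (if (∀ k ∈ insert (m+4) I, (k % (m+4) + 1) ∉ insert (m+4) I) then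
          (-1 : ℂ) ^ (insert (m+4) I).card * ∏ k ∈ insert (m+4) I, c (k : ℤ) else 0)
        = D c 2 (m + 5) := by
      rw [h2v]
      have hexp := D_expand c (m+1) 2
      rw [show (m+1)+2 = m+3 from by omega, Nat.cast_two] at hexp
      rw [hexp, Finset.sum_filter, Finset.mul_sum]
      have hsub : (Finset.Ico 2 (2 + (m+1))).powerset ⊆ (Finset.Icc 1 (m+3)).powerset :=
        Finset.powerset_mono.2 (by intro k; simp; omega)
      rw [← Finset.sum_subset hsub ?vanish]
      case vanish =>
        intro I hI hnI
        have hIsub : I ⊆ Finset.Icc 1 (m+3) := Finset.mem_powerset.1 hI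
        have : (1 ∈ I) ∨ (m+3 ∈ I) := by
          by_contra hcon
          push_neg at hcon
          apply hnI
          rw [Finset.mem_powerset]
          intro k hk
          have := hIsub hk
          simp only [Finset.mem_Icc] at this
          simp only [Finset.mem_Ico]
          have h1 : k ≠ 1 := fun hh => hcon.1 (hh ▸ hk)
          have h2 : k ≠ m+3 := fun hh => hcon.2 (hh ▸ hk)
          omega
        rw [if_neg]
        intro H
        rcases this with h1 | h2
        · exact H (m+4) (Finset.mem_insert_self _ _)
            (by rw [Nat.mod_self]; exact Finset.mem_insert_of_mem h1)
        · have := H (m+3) (Finset.mem_insert_of_mem h2)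
          rw [Nat.mod_eq_of_lt (by omega)] at this
          exact this (Finset.mem_insert_self _ _)
      · apply Finset.sum_congr rfl
        intro I hI
        have hIsub : I ⊆ Finset.Ico 2 (2 + (m+1)) := Finset.mem_powerset.1 hI
        have hbound : ∀ k ∈ I, 2 ≤ k ∧ k < m + 3 := by
          intro k hk; have := hIsub hk; simp at this; omega
        have hnI4 : (m+4) ∉ I := by intro h; have := hbound _ h; omega
        have hiff : (∀ k ∈ insert (m+4) I, (k % (m+4) + 1) ∉ insert (m+4) I)
            ↔ (∀ k ∈ I, k + 1 ∉ I) := by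
          constructor
          · intro H k hk
            have := H k (Finset.mem_insert_of_mem hk)
            rw [Nat.mod_eq_of_lt (by have := hbound _ hk; omega)] at this
            intro hk1
            exact this (Finset.mem_insert_of_mem hk1)
          · intro H k hk
            rcases Finset.mem_insert.1 hk with rfl | hk
            · rw [Nat.mod_self]
              intro hmem
              rcases Finset.mem_insert.1 hmem with h | h
              · omega
              · have := hbound _ h; omega
            · rw [Nat.mod_eq_of_lt (by have := hbound _ hk; omega)]
              intro hmem
              rcases Finset.mem_insert.1 hmem with h | h
              · have := hbound _ hk; omega
              · exact H k hk h
        rw [if_congr hiff rfl rfl]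
        by_cases hs : ∀ k ∈ I, k + 1 ∉ I
        · rw [if_pos hs, if_pos hs, Finset.card_insert_of_notMem hnI4,
            Finset.prod_insert hnI4, pow_succ]
          ring
        · rw [if_neg hs, if_neg hs, mul_zero]
    rw [part1, part2]
  intro i
  constructor
  · exact e1 i
  · rw [show (m+4)+1 = m+5 from by omega, hsum, hE i, hE 2]
    ring
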